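/- Let p be a prime and k a field of characteristic p. In the adjoint action of GL(p,k) on gl(p,k) (p×p matrices, by conjugation), the fixed subspace is the line k·Id of scalar matrices, and this line admits no GL(p)-stable (equivalently, no conjugation-stable) linear complement in gl(p,k). -/

import Mathlib

open Matrix

private noncomputable def permGL9 {n : Type*} [DecidableEq n] [Fintype n] (k : Type*) [Field k]
    (σ : Equiv.Perm n) : GL n k :=
  ⟨σ.permMatrix k, σ⁻¹.permMatrix k,
   by rw [← PEquiv.toMatrix_trans, ← Equiv.toPEquiv_trans]
      rw [show σ.trans σ⁻¹ = Equiv.refl n by ext x; simp, Equiv.toPEquiv_refl, PEquiv.toMatrix_refl],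
   by rw [← PEquiv.toMatrix_trans, ← Equiv.toPEquiv_trans]
      rw [show (σ⁻¹ : Equiv.Perm n).trans σ = Equiv.refl n by ext x; simp,
        Equiv.toPEquiv_refl, PEquiv.toMatrix_refl]⟩

private lemma permGL9_conj {p : ℕ} (k : Type*) [Field k] (σ : Equiv.Perm (Fin p)) (a : Fin p) :
    (permGL9 k σ : Matrix (Fin p) (Fin p) k) * single a a (1:k) *
      (↑(permGL9 k σ)⁻¹ : Matrix (Fin p) (Fin p) k) = single (σ⁻¹ a) (σ⁻¹ a) 1 := by
  show σ.permMatrix k * single a a (1:k) * σ⁻¹.permMatrix k = _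
  rw [PEquiv.toMatrix_toPEquiv_mul, PEquiv.mul_toMatrix_toPEquiv]
  ext i j
  simp [single, Equiv.eq_symm_apply, eq_comm, Equiv.Perm.inv_def]

/-- In characteristic `p`, for the adjoint (conjugation) action of `GL(p,k)` on
`gl(p,k)`, the fixed subspace is the line of scalar matrices `k·Id`, and this line
admits no conjugation-stable linear complement. -/
theorem stmt9 (p : ℕ) (hp : p.Prime) (k : Type*) [Field k] [CharP k p] :
    ({A : Matrix (Fin p) (Fin p) k |
        ∀ g : GL (Fin p) k, (g : Matrix (Fin p) (Fin p) k) * A * (↑g⁻¹ : Matrix (Fin p) (Fin p) k) = A}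
      = Set.range (fun c : k => c • (1 : Matrix (Fin p) (Fin p) k))) ∧
    ¬ ∃ W : Submodule k (Matrix (Fin p) (Fin p) k),
        IsCompl (Submodule.span k {(1 : Matrix (Fin p) (Fin p) k)}) W ∧
        ∀ g : GL (Fin p) k, ∀ A ∈ W,
          (g : Matrix (Fin p) (Fin p) k) * A * (↑g⁻¹ : Matrix (Fin p) (Fin p) k) ∈ W := by
  constructor
  · ext A
    constructor
    · intro hA
      have h : A ∈ Set.range (Matrix.scalar (Fin p)) := by
        apply Matrix.mem_range_scalar_of_commute_transvectionStruct
        intro t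
        have h1 : t.toMatrix * A * t.inv.toMatrix = A :=
          hA ⟨t.toMatrix, t.inv.toMatrix, t.mul_inv, t.inv_mul⟩
        have h2 : t.toMatrix * A * t.inv.toMatrix * t.toMatrix = A * t.toMatrix := by rw [h1]
        rw [mul_assoc, mul_assoc, t.inv_mul, mul_one] at h2
        exact h2
      obtain ⟨c, hc⟩ := h
      exact ⟨c, by rw [← hc]; simp [smul_one_eq_diagonal]⟩
    · rintro ⟨c, rfl⟩ g
      simp only [Matrix.mul_smul, Matrix.smul_mul, mul_one]
      rw [show (g : Matrix (Fin p) (Fin p) k) * (↑g⁻¹ : Matrix (Fin p) (Fin p) k) = 1 from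
        Units.mul_inv g]
  · rintro ⟨W, hcompl, hstab⟩
    have hone : (1 : k) ≠ 0 := one_ne_zero
    -- decompose E00
    have htop : (⊤ : Submodule k (Matrix (Fin p) (Fin p) k)) =
        Submodule.span k {(1 : Matrix (Fin p) (Fin p) k)} ⊔ W := (codisjoint_iff.mp hcompl.2).symm
    have hi0 : (0 : ℕ) < p := hp.pos
    obtain ⟨s, hs, w, hw, hsw⟩ := Submodule.mem_sup.mp
      (htop ▸ Submodule.mem_top :
        single (⟨0, hi0⟩ : Fin p) ⟨0, hi0⟩ (1:k) ∈ _)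
    obtain ⟨c, rfl⟩ := Submodule.mem_span_singleton.mp hs
    -- conjugate by swaps
    have key : ∀ i : Fin p, ∃ wi ∈ W, single i i (1:k) = c • 1 + wi := by
      intro i
      set σ := Equiv.swap (⟨0, hi0⟩ : Fin p) i
      refine ⟨(permGL9 k σ⁻¹ : Matrix (Fin p) (Fin p) k) * w *
        (↑(permGL9 k σ⁻¹)⁻¹ : Matrix (Fin p) (Fin p) k), hstab _ _ hw, ?_⟩
      have := permGL9_conj k σ⁻¹ (⟨0, hi0⟩ : Fin p)
      rw [inv_inv] at this
      have hσ : σ (⟨0, hi0⟩ : Fin p) = i := Equiv.swap_apply_left _ _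
      rw [hσ] at this
      calc single i i (1:k)
          = (permGL9 k σ⁻¹ : Matrix (Fin p) (Fin p) k) * single ⟨0, hi0⟩ ⟨0, hi0⟩ (1:k) *
            (↑(permGL9 k σ⁻¹)⁻¹ : Matrix (Fin p) (Fin p) k) := this.symm
        _ = (permGL9 k σ⁻¹ : Matrix (Fin p) (Fin p) k) * (c • 1 + w) *
            (↑(permGL9 k σ⁻¹)⁻¹ : Matrix (Fin p) (Fin p) k) := by rw [hsw]
        _ = c • 1 + (permGL9 k σ⁻¹ : Matrix (Fin p) (Fin p) k) * w *
            (↑(permGL9 k σ⁻¹)⁻¹ : Matrix (Fin p) (Fin p) k) := by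
          rw [mul_add, add_mul]
          congr 1
          simp only [Matrix.mul_smul, Matrix.smul_mul, mul_one]
          rw [show ((permGL9 k σ⁻¹ : GL (Fin p) k) : Matrix (Fin p) (Fin p) k) *
            (↑(permGL9 k σ⁻¹)⁻¹ : Matrix (Fin p) (Fin p) k) = 1 from Units.mul_inv _]
    choose wi hwi hdec using key
    have hsum : (1 : Matrix (Fin p) (Fin p) k) = ∑ i : Fin p, single i i (1:k) := by
      ext a b
      simp [Matrix.sum_apply, one_apply, single, ite_and, Finset.sum_ite_eq]
    have h1W : (1 : Matrix (Fin p) (Fin p) k) ∈ W := by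
      have : (1 : Matrix (Fin p) (Fin p) k) = ∑ i : Fin p, (c • 1 + wi i) :=
        hsum.trans (Finset.sum_congr rfl fun i _ => hdec i)
      rw [Finset.sum_add_distrib, Finset.sum_const, Finset.card_univ, Fintype.card_fin] at this
      have hz : (p : ℕ) • (c • (1 : Matrix (Fin p) (Fin p) k)) = 0 := by
        rw [← Nat.cast_smul_eq_nsmul k, smul_smul]
        simp [CharP.cast_eq_zero k p]
      rw [hz, zero_add] at this
      rw [this]
      exact Submodule.sum_mem W fun i _ => hwi i
    have h1span : (1 : Matrix (Fin p) (Fin p) k) ∈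
        Submodule.span k {(1 : Matrix (Fin p) (Fin p) k)} := Submodule.mem_span_singleton_self _
    have : (1 : Matrix (Fin p) (Fin p) k) = 0 :=
      Submodule.disjoint_def.mp hcompl.1 _ h1span h1W
    have := congrFun (congrFun this ⟨0, hi0⟩) ⟨0, hi0⟩
    simp [one_apply] at this
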